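/- Let K ⊆ N be submodules of an R-module M. If N is a weakly S-primary submodule of M, then N/K is a weakly S-primary submodule of M/K. -/

import Mathlib

open Submodule

/-- `N` is a weakly `S`-primary submodule of `M`. -/
def IsWeaklySPrimary {R : Type*} [CommRing R] {M : Type*} [AddCommGroup M] [Module R M]
    (S : Set R) (N : Submodule R M) : Prop :=
  ((N.colon ⊤ : Ideal R) : Set R) ∩ S = ∅ ∧
    ∃ s ∈ S, ∀ (a : R) (m : M), a • m ≠ 0 → a • m ∈ N →
      s * a ∈ (N.colon ⊤ : Ideal R).radical ∨ s • m ∈ N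

/-- `N` is an `S`-primary submodule of `M`. -/
def IsSPrimary {R : Type*} [CommRing R] {M : Type*} [AddCommGroup M] [Module R M]
    (S : Set R) (N : Submodule R M) : Prop :=
  ((N.colon ⊤ : Ideal R) : Set R) ∩ S = ∅ ∧
    ∃ s ∈ S, ∀ (a : R) (m : M), a • m ∈ N →
      s * a ∈ (N.colon ⊤ : Ideal R).radical ∨ s • m ∈ N

/-- `N` is a weakly primary (proper) submodule of `M`. -/
def IsWeaklyPrimary {R : Type*} [CommRing R] {M : Type*} [AddCommGroup M] [Module R M]
    (N : Submodule R M) : Prop :=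
  N ≠ ⊤ ∧ ∀ (a : R) (m : M), a • m ≠ 0 → a • m ∈ N →
      a ∈ (N.colon ⊤ : Ideal R).radical ∨ m ∈ N

/-- `I` is a weakly `S`-primary ideal of `R`. -/
def IsWeaklySPrimaryIdeal {R : Type*} [CommRing R] (S : Set R) (I : Ideal R) : Prop :=
  (I : Set R) ∩ S = ∅ ∧
    ∃ s ∈ S, ∀ a b : R, a * b ≠ 0 → a * b ∈ I → s * a ∈ I.radical ∨ s * b ∈ I

theorem stmt15 {R : Type*} [CommRing R] {M : Type*} [AddCommGroup M] [Module R M]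
    (S : Set R) (hS : ∀ x ∈ S, ∀ y ∈ S, x * y ∈ S)
    (K N : Submodule R M) (hKN : K ≤ N)
    (hN : IsWeaklySPrimary S N) :
    IsWeaklySPrimary S (N.map K.mkQ) := by
  obtain ⟨hdisj, s, hsS, hs⟩ := hN
  have hcomap : (N.map K.mkQ).comap K.mkQ = N := by
    rw [Submodule.comap_map_eq, Submodule.ker_mkQ, sup_eq_left.mpr hKN]
  have hcolon : ((N.map K.mkQ).colon ⊤ : Ideal R) = N.colon ⊤ := by
    ext r
    simp only [Submodule.mem_colon, Submodule.mem_top, forall_true_left]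
    constructor
    · intro h m
      have := h (K.mkQ m)
      rw [← map_smul] at this
      rw [← hcomap]
      exact this
    · intro h x
      obtain ⟨m, rfl⟩ := K.mkQ_surjective x
      rw [← map_smul]
      exact fun _ => Submodule.mem_map_of_mem (h m trivial)
  refine ⟨by rw [hcolon]; exact hdisj, s, hsS, ?_⟩
  intro a x hx0 hxN
  obtain ⟨m, rfl⟩ := K.mkQ_surjective x
  rw [← map_smul] at hxN hx0
  have ham : a • m ∈ N := by rw [← hcomap]; exact hxN
  have ham0 : a • m ≠ 0 := by
    intro h; exact hx0 (by rw [h, map_zero])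
  rcases hs a m ham0 ham with h | h
  · left; rw [hcolon]; exact h
  · right; rw [← map_smul]; exact Submodule.mem_map_of_mem h
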